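/- Let 1 → ℤ/d → Γ_d → Γ → 1 be a central exact sequence with d ≥ 2. If Γ_d is residually finite then Γ_d is virtually isomorphic to Γ: there exist finite index subgroups Λ ≤ Γ and Λ' ≤ Γ_d with Λ ≅ Λ', where Λ' is the image of a section s : Λ → Γ_d of the projection. -/

import Mathlib

/-- A group is residually finite if every nontrivial element survives in some
finite quotient. -/
def ResiduallyFinite (G : Type*) [Group G] : Prop :=
  ∀ g : G, g ≠ 1 → ∃ (F : Type) (_ : Group F) (_ : Finite F) (ρ : G →* F), ρ g ≠ 1

/-- Let `1 → ℤ/d → Γ_d → Γ → 1` be a central exact sequence with `d ≥ 2`.  If `Γ_d`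
is residually finite, then `Γ_d` is virtually isomorphic to `Γ`: there is a finite
index subgroup `Λ ≤ Γ` and a section `s : Λ → Γ_d` of the projection whose image
`Λ' = s(Λ)` is a finite index subgroup of `Γ_d` isomorphic to `Λ`. -/
theorem virtually_isomorphic_of_residuallyFinite_central_extension
    (d : ℕ) (hd : 2 ≤ d) (Γd Γ : Type*) [Group Γd] [Group Γ]
    (π : Γd →* Γ) (hπ : Function.Surjective π)
    (ι : Multiplicative (ZMod d) →* Γd) (hι : Function.Injective ι)
    (hker : ι.range = π.ker) (hcent : ι.range ≤ Subgroup.center Γd)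
    (hRF : ResiduallyFinite Γd) :
    ∃ Λ : Subgroup Γ, Λ.FiniteIndex ∧ ∃ s : Λ →* Γd,
      (∀ x : Λ, π (s x) = (x : Γ)) ∧ s.range.FiniteIndex ∧ Nonempty (Λ ≃* s.range) := by
  haveI : NeZero d := ⟨by omega⟩
  -- For each nontrivial k, pick a finite quotient detecting ι k.
  have key : ∀ k : {k : Multiplicative (ZMod d) // k ≠ 1},
      ∃ (F : Type) (_ : Group F) (_ : Finite F) (ρ : Γd →* F), ρ (ι k.1) ≠ 1 := by
    intro k
    exact hRF (ι k.1) (fun h => k.2 (hι (by simpa using h)))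
  choose F hG hF ρ hρ using key
  letI : ∀ k, Group (F k) := hG
  haveI : ∀ k, Finite (F k) := hF
  set ρtot : Γd →* ∀ k, F k := Pi.monoidHom ρ with hρtot
  set N : Subgroup Γd := ρtot.ker with hN
  haveI : Finite (∀ k, F k) := by infer_instance
  haveI hNfi : N.FiniteIndex := Subgroup.finiteIndex_ker ρtot
  -- N meets ker π trivially
  have hdisj : ∀ x : Γd, x ∈ N → π x = 1 → x = 1 := by
    intro x hx hpx
    have : x ∈ π.ker := hpx
    rw [← hker] at this
    obtain ⟨k, rfl⟩ := this
    by_contra hne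
    have hk1 : k ≠ 1 := fun h => hne (by rw [h, map_one])
    have := hρ ⟨k, hk1⟩
    exact this (congrFun hx ⟨k, hk1⟩)
  -- φ : N →* Γ is injective
  set φ : N →* Γ := π.comp N.subtype with hφ
  have hφinj : Function.Injective φ := by
    rw [← MonoidHom.ker_eq_bot_iff]
    ext ⟨x, hx⟩
    simp only [MonoidHom.mem_ker, Subgroup.mem_bot]
    constructor
    · intro h
      exact Subtype.ext (hdisj x hx h)
    · intro h; rw [h, map_one]
  set Λ : Subgroup Γ := N.map π with hΛ
  have hrange : φ.range = Λ := by
    rw [hφ, hΛ, MonoidHom.range_comp, Subgroup.range_subtype]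
  refine ⟨Λ, ?_, ?_⟩
  · constructor
    have hdvd := Subgroup.index_map_dvd (H := N) hπ
    intro h
    rw [hΛ] at *
    exact hNfi.index_ne_zero (Nat.eq_zero_of_zero_dvd (h ▸ hdvd))
  · -- the isomorphism N ≃* Λ
    let e : N ≃* Λ := (MonoidHom.ofInjective hφinj).trans (MulEquiv.subgroupCongr hrange)
    have he : ∀ y : N, (e y : Γ) = φ y := fun y => MonoidHom.ofInjective_apply hφinj
    refine ⟨N.subtype.comp e.symm.toMonoidHom, ?_, ?_, ?_⟩
    · intro x
      have : φ (e.symm x) = (x : Γ) := by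
        rw [← he (e.symm x), e.apply_symm_apply]
      simpa [hφ] using this
    · have hr : (N.subtype.comp e.symm.toMonoidHom).range = N := by
        rw [MonoidHom.range_comp]
        have : e.symm.toMonoidHom.range = ⊤ := MonoidHom.range_eq_top.mpr e.symm.surjective
        rw [this, ← MonoidHom.range_eq_map, Subgroup.range_subtype]
      rw [hr]; exact hNfi
    · have hsinj : Function.Injective (N.subtype.comp e.symm.toMonoidHom) :=
        N.subtype_injective.comp e.symm.injective
      exact ⟨MonoidHom.ofInjective hsinj⟩
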